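/- There exists a quadratic polynomial on ℝ² with nonzero coefficient vector that vanishes at the eight points T_{P'}⁻¹(A), T_{P'}⁻¹(B), T_{P'}⁻¹(C) (the vertices of the anticevian triangle of Q), T_P⁻¹(A), T_P⁻¹(B), T_P⁻¹(C) (the vertices of the anticevian triangle of Q'), Q, and Q'. (This conic is T_P⁻¹(𝒞_P) = T_{P'}⁻¹(𝒞_P).) -/

import Mathlib

noncomputable section

abbrev Pt := EuclideanSpace ℝ (Fin 2)

/-- The quadratic polynomial `a*x^2 + b*x*y + c*y^2 + d*x + e*y + f` evaluated at a point. -/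
def qeval (a b c d e f : ℝ) (W : Pt) : ℝ :=
  a * (W 0)^2 + b * (W 0) * (W 1) + c * (W 1)^2 + d * (W 0) + e * (W 1) + f

lemma comb3 {V : Type*} [AddCommGroup V] [Module ℝ V]
    (f : Pt →ᵃ[ℝ] V) (A B C : Pt) (u v w : ℝ) (h : u + v + w = 1) :
    f (u • A + v • B + w • C) = u • f A + v • f B + w • f C := by
  have hu : u = 1 - v - w := by linarith
  subst hu
  have hA : (1 - v - w) • A + v • B + w • C = (v • (B - A) + w • (C - A)) +ᵥ A := by
    simp only [vadd_eq_add]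
    module
  rw [hA, f.map_vadd, map_add, map_smul, map_smul]
  have h1 : f.linear (B - A) = f B - f A := by
    simpa [vsub_eq_sub] using f.linearMap_vsub B A
  have h2 : f.linear (C - A) = f C - f A := by
    simpa [vsub_eq_sub] using f.linearMap_vsub C A
  rw [h1, h2, vadd_eq_add]
  module

def ee0 : Pt := EuclideanSpace.single 0 1
def ee1 : Pt := EuclideanSpace.single 1 1

lemma expand_aff (f : Pt →ᵃ[ℝ] ℝ) (W : Pt) :
    f W = W 0 * f.linear ee0 + W 1 * f.linear ee1 + f 0 := by
  have hW : W = (W 0 • ee0 + W 1 • ee1) +ᵥ (0 : Pt) := by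
    simp only [vadd_eq_add, add_zero]
    ext i
    fin_cases i <;> simp [ee0, ee1, EuclideanSpace.single_apply]
  conv_lhs => rw [hW]
  rw [f.map_vadd, map_add, map_smul, map_smul, vadd_eq_add]
  simp only [smul_eq_mul]

lemma quad_exists (pp qq rr : ℝ) (L0 L1 L2 : Pt →ᵃ[ℝ] ℝ) :
    ∃ a b c d e f : ℝ,
      ∀ W : Pt, qeval a b c d e f W = pp * (L0 W)^2 + qq * (L1 W)^2 + rr * (L2 W)^2 := by
  refine ⟨pp*(L0.linear ee0)^2 + qq*(L1.linear ee0)^2 + rr*(L2.linear ee0)^2,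
    2*(pp*(L0.linear ee0)*(L0.linear ee1) + qq*(L1.linear ee0)*(L1.linear ee1)
      + rr*(L2.linear ee0)*(L2.linear ee1)),
    pp*(L0.linear ee1)^2 + qq*(L1.linear ee1)^2 + rr*(L2.linear ee1)^2,
    2*(pp*(L0.linear ee0)*(L0 0) + qq*(L1.linear ee0)*(L1 0) + rr*(L2.linear ee0)*(L2 0)),
    2*(pp*(L0.linear ee1)*(L0 0) + qq*(L1.linear ee1)*(L1 0) + rr*(L2.linear ee1)*(L2 0)),
    pp*(L0 0)^2 + qq*(L1 0)^2 + rr*(L2 0)^2, ?_⟩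
  intro W
  rw [qeval, expand_aff L0 W, expand_aff L1 W, expand_aff L2 W]
  ring

set_option maxHeartbeats 4000000 in
theorem stmt13
    (A B C : Pt) (hABC : AffineIndependent ℝ ![A, B, C])
    (α β γ : ℝ) (hsum : α + β + γ = 1)
    (hα : α ≠ 0) (hβ : β ≠ 0) (hγ : γ ≠ 0)
    (hβγ : β + γ ≠ 0) (hγα : γ + α ≠ 0) (hαβ : α + β ≠ 0)
    (hab : α ≠ β) (hbc : β ≠ γ) (hca : γ ≠ α)
    (hs : α * β + β * γ + γ * α ≠ 0)
    (G : Pt) (hG : G = (3:ℝ)⁻¹ • (A + B + C))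
    (P : Pt) (hP : P = α • A + β • B + γ • C)
    (P' : Pt)
    (hP'' : P' = (α * β + β * γ + γ * α)⁻¹ • ((β * γ) • A + (γ * α) • B + (α * β) • C))
    (Q : Pt) (hQ : Q = G - (2:ℝ)⁻¹ • (P' - G))
    (Q' : Pt) (hQ' : Q' = G - (2:ℝ)⁻¹ • (P - G))
    (D E F : Pt)
    (hD : D = (β + γ)⁻¹ • (β • B + γ • C))
    (hE : E = (γ + α)⁻¹ • (α • A + γ • C))
    (hF : F = (α + β)⁻¹ • (α • A + β • B))
    (D₃ E₃ F₃ : Pt)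
    (hD₃ : D₃ = (β + γ)⁻¹ • (γ • B + β • C))
    (hE₃ : E₃ = (γ + α)⁻¹ • (γ • A + α • C))
    (hF₃ : F₃ = (α + β)⁻¹ • (β • A + α • B))
    (TP : Pt ≃ᵃ[ℝ] Pt) (hTPA : TP A = D) (hTPB : TP B = E) (hTPC : TP C = F)
    (TP' : Pt ≃ᵃ[ℝ] Pt) (hTP'A : TP' A = D₃) (hTP'B : TP' B = E₃) (hTP'C : TP' C = F₃)
    :
    ∃ a b c d e f : ℝ, (a, b, c, d, e, f) ≠ (0, 0, 0, 0, 0, 0) ∧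
      qeval a b c d e f (TP'.symm A) = 0 ∧ qeval a b c d e f (TP'.symm B) = 0 ∧
      qeval a b c d e f (TP'.symm C) = 0 ∧ qeval a b c d e f (TP.symm A) = 0 ∧
      qeval a b c d e f (TP.symm B) = 0 ∧ qeval a b c d e f (TP.symm C) = 0 ∧
      qeval a b c d e f Q = 0 ∧ qeval a b c d e f Q' = 0 := by
  -- barycentric coordinate functions
  have hspan : affineSpan ℝ (Set.range ![A, B, C]) = ⊤ := by
    rw [hABC.affineSpan_eq_top_iff_card_eq_finrank_add_one]
    simp [finrank_euclideanSpace_fin]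
  set b : AffineBasis (Fin 3) ℝ Pt := ⟨![A, B, C], hABC, hspan⟩ with hbdef
  have hb0 : b 0 = A := rfl
  have hb1 : b 1 = B := rfl
  have hb2 : b 2 = C := rfl
  set L0 := b.coord 0 with hL0def
  set L1 := b.coord 1 with hL1def
  set L2 := b.coord 2 with hL2def
  have h00 : L0 A = 1 := by rw [← hb0]; exact b.coord_apply_eq 0
  have h01 : L0 B = 0 := by rw [← hb1]; exact b.coord_apply_ne (by decide)
  have h02 : L0 C = 0 := by rw [← hb2]; exact b.coord_apply_ne (by decide)
  have h10 : L1 A = 0 := by rw [← hb0]; exact b.coord_apply_ne (by decide)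
  have h11 : L1 B = 1 := by rw [← hb1]; exact b.coord_apply_eq 1
  have h12 : L1 C = 0 := by rw [← hb2]; exact b.coord_apply_ne (by decide)
  have h20 : L2 A = 0 := by rw [← hb0]; exact b.coord_apply_ne (by decide)
  have h21 : L2 B = 0 := by rw [← hb1]; exact b.coord_apply_ne (by decide)
  have h22 : L2 C = 1 := by rw [← hb2]; exact b.coord_apply_eq 2
  -- the conic coefficients (in barycentric form)
  set pp : ℝ := (β*(γ+α))^2*(α+β)^2 - (γ*(α+β))^2*(γ+α)^2 with hppdef
  set qq : ℝ := (γ*(α+β))^2*(β+γ)^2 - (α*(β+γ))^2*(α+β)^2 with hqqdef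
  set rr : ℝ := (α*(β+γ))^2*(γ+α)^2 - (β*(γ+α))^2*(β+γ)^2 with hrrdef
  have hpp : pp ≠ 0 := by
    have : pp = (γ+α)^2*(α+β)^2*(β-γ)*(β+γ) := by rw [hppdef]; ring
    rw [this]
    exact mul_ne_zero (mul_ne_zero (mul_ne_zero (pow_ne_zero 2 hγα) (pow_ne_zero 2 hαβ))
      (sub_ne_zero.mpr hbc)) hβγ
  have key1 : pp*(α*(β+γ))^2 + qq*(β*(γ+α))^2 + rr*(γ*(α+β))^2 = 0 := by
    rw [hppdef, hqqdef, hrrdef]; ring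
  have key2 : pp*(β+γ)^2 + qq*(γ+α)^2 + rr*(α+β)^2 = 0 := by
    rw [hppdef, hqqdef, hrrdef]; ring
  obtain ⟨a, bb, c, d, e, f, hq⟩ := quad_exists pp qq rr L0 L1 L2
  -- master evaluation lemma
  have main : ∀ (W : Pt) (u v w : ℝ), u + v + w = 1 → W = u • A + v • B + w • C →
      qeval a bb c d e f W = pp * u^2 + qq * v^2 + rr * w^2 := by
    intro W u v w hsw hW
    rw [hq W, hW, comb3 L0 A B C u v w hsw, comb3 L1 A B C u v w hsw,
      comb3 L2 A B C u v w hsw, h00, h01, h02, h10, h11, h12, h20, h21, h22]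
    simp only [smul_eq_mul]
    ring
  -- a helper for applying TP / TP' to affine combinations
  have mapcomb : ∀ (T : Pt ≃ᵃ[ℝ] Pt) (u v w : ℝ), u + v + w = 1 →
      T (u • A + v • B + w • C) = u • T A + v • T B + w • T C := by
    intro T u v w hsw
    simpa using comb3 T.toAffineMap A B C u v w hsw
  -- a helper to identify preimages
  have preim : ∀ (T : Pt ≃ᵃ[ℝ] Pt) (W : Pt) (u v w : ℝ), u + v + w = 1 →
      T (u • A + v • B + w • C) = W → T.symm W = u • A + v • B + w • C := by
    intro T W u v w hsw h'
    rw [← h', AffineEquiv.symm_apply_apply]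
  refine ⟨a, bb, c, d, e, f, ?_, ?_, ?_, ?_, ?_, ?_, ?_, ?_, ?_⟩
  · -- nonzero coefficient vector
    intro hzero
    simp only [Prod.mk.injEq] at hzero
    obtain ⟨h1, h2, h3, h4, h5, h6⟩ := hzero
    have hA' := main A 1 0 0 (by norm_num) (by module)
    rw [h1, h2, h3, h4, h5, h6] at hA'
    simp [qeval] at hA'
    exact hpp hA'.symm
  · -- TP'.symm A
    have hsw : (-(α*(β+γ))/(2*(β*γ))) + (β*(γ+α))/(2*(β*γ)) + (γ*(α+β))/(2*(β*γ)) = 1 := by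
      field_simp; ring
    have hrep := preim TP' A _ _ _ hsw (by
      rw [mapcomb TP' _ _ _ hsw, hTP'A, hTP'B, hTP'C, hD₃, hE₃, hF₃]
      match_scalars <;> field_simp <;> ring)
    rw [main _ _ _ _ hsw hrep]
    linear_combination ((2*(β*γ))⁻¹)^2 * key1
  · -- TP'.symm B
    have hsw : ((α*(β+γ))/(2*(γ*α))) + (-(β*(γ+α))/(2*(γ*α))) + (γ*(α+β))/(2*(γ*α)) = 1 := by
      field_simp; ring
    have hrep := preim TP' B _ _ _ hsw (by
      rw [mapcomb TP' _ _ _ hsw, hTP'A, hTP'B, hTP'C, hD₃, hE₃, hF₃]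
      match_scalars <;> field_simp <;> ring)
    rw [main _ _ _ _ hsw hrep]
    linear_combination ((2*(γ*α))⁻¹)^2 * key1
  · -- TP'.symm C
    have hsw : ((α*(β+γ))/(2*(α*β))) + ((β*(γ+α))/(2*(α*β))) + (-(γ*(α+β))/(2*(α*β))) = 1 := by
      field_simp; ring
    have hrep := preim TP' C _ _ _ hsw (by
      rw [mapcomb TP' _ _ _ hsw, hTP'A, hTP'B, hTP'C, hD₃, hE₃, hF₃]
      match_scalars <;> field_simp <;> ring)
    rw [main _ _ _ _ hsw hrep]
    linear_combination ((2*(α*β))⁻¹)^2 * key1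
  · -- TP.symm A
    have hsw : (-(β+γ)/(2*α)) + (γ+α)/(2*α) + (α+β)/(2*α) = 1 := by
      field_simp; ring
    have hrep := preim TP A _ _ _ hsw (by
      rw [mapcomb TP _ _ _ hsw, hTPA, hTPB, hTPC, hD, hE, hF]
      match_scalars <;> field_simp <;> ring)
    rw [main _ _ _ _ hsw hrep]
    linear_combination ((2*α)⁻¹)^2 * key2
  · -- TP.symm B
    have hsw : ((β+γ)/(2*β)) + (-(γ+α)/(2*β)) + (α+β)/(2*β) = 1 := by
      field_simp; ring
    have hrep := preim TP B _ _ _ hsw (by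
      rw [mapcomb TP _ _ _ hsw, hTPA, hTPB, hTPC, hD, hE, hF]
      match_scalars <;> field_simp <;> ring)
    rw [main _ _ _ _ hsw hrep]
    linear_combination ((2*β)⁻¹)^2 * key2
  · -- TP.symm C
    have hsw : ((β+γ)/(2*γ)) + ((γ+α)/(2*γ)) + (-(α+β)/(2*γ)) = 1 := by
      field_simp; ring
    have hrep := preim TP C _ _ _ hsw (by
      rw [mapcomb TP _ _ _ hsw, hTPA, hTPB, hTPC, hD, hE, hF]
      match_scalars <;> field_simp <;> ring)
    rw [main _ _ _ _ hsw hrep]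
    linear_combination ((2*γ)⁻¹)^2 * key2
  · -- Q
    have hsw : (α*(β+γ))/(2*(α*β+β*γ+γ*α)) + (β*(γ+α))/(2*(α*β+β*γ+γ*α))
        + (γ*(α+β))/(2*(α*β+β*γ+γ*α)) = 1 := by
      rw [← add_div, ← add_div, div_eq_one_iff_eq (mul_ne_zero two_ne_zero hs)]; ring
    have hrep : Q = ((α*(β+γ))/(2*(α*β+β*γ+γ*α))) • A + ((β*(γ+α))/(2*(α*β+β*γ+γ*α))) • B
        + ((γ*(α+β))/(2*(α*β+β*γ+γ*α))) • C := by
      rw [hQ, hG, hP'']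
      obtain ⟨S, hS⟩ : ∃ S, α*β+β*γ+γ*α = S := ⟨_, rfl⟩
      rw [hS] at hs ⊢
      match_scalars <;> field_simp <;> linear_combination (-3:ℝ) * hS
    rw [main _ _ _ _ hsw hrep]
    linear_combination ((2*(α*β+β*γ+γ*α))⁻¹)^2 * key1
  · -- Q'
    have hsw : (β+γ)/2 + (γ+α)/2 + (α+β)/2 = 1 := by
      field_simp; linarith
    have hrep : Q' = ((β+γ)/2) • A + ((γ+α)/2) • B + ((α+β)/2) • C := by
      rw [hQ', hG, hP]
      match_scalars <;> field_simp <;> linarith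
    rw [main _ _ _ _ hsw hrep]
    linear_combination ((2:ℝ)⁻¹)^2 * key2
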